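/- Let M > 0. Then q ↦ 1/(‖q‖²+M²)⁴ is Lebesgue integrable on ℝ⁴ and ∫_{ℝ⁴} dq/(‖q‖²+M²)⁴ = π²/(6M⁴). -/

import Mathlib

set_option maxHeartbeats 1000000


open MeasureTheory Real Filter Metric

private lemma radial_integral_aux (M : ℝ) (hM : 0 < M) :
    ∫ y in Set.Ioi (0 : ℝ), y ^ 3 * (1 / (y ^ 2 + M ^ 2) ^ 4) = 1 / (12 * M ^ 4) := by
  have hne : ∀ y : ℝ, y ^ 2 + M ^ 2 ≠ 0 := fun y => by positivity
  set g : ℝ → ℝ := fun y => M ^ 2 / (6 * (y ^ 2 + M ^ 2) ^ 3) - 1 / (4 * (y ^ 2 + M ^ 2) ^ 2)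
    with hg
  have hderiv : ∀ y : ℝ, HasDerivAt g (y ^ 3 * (1 / (y ^ 2 + M ^ 2) ^ 4)) y := by
    intro y
    have h1 : HasDerivAt (fun y : ℝ => y ^ 2 + M ^ 2) (2 * y) y := by
      simpa using ((hasDerivAt_pow 2 y).add_const (M ^ 2))
    have h3 : HasDerivAt (fun y : ℝ => 6 * (y ^ 2 + M ^ 2) ^ 3)
        (6 * (3 * (y ^ 2 + M ^ 2) ^ 2 * (2 * y))) y :=
      ((h1.pow 3).const_mul 6)
    have h4 : HasDerivAt (fun y : ℝ => 4 * (y ^ 2 + M ^ 2) ^ 2)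
        (4 * (2 * (y ^ 2 + M ^ 2) ^ 1 * (2 * y))) y :=
      ((h1.pow 2).const_mul 4)
    have hd1 : HasDerivAt (fun y : ℝ => M ^ 2 / (6 * (y ^ 2 + M ^ 2) ^ 3))
        (-(M ^ 2 * (6 * (3 * (y ^ 2 + M ^ 2) ^ 2 * (2 * y)))) / (6 * (y ^ 2 + M ^ 2) ^ 3) ^ 2)
        y := by
      exact ((hasDerivAt_const y (M ^ 2)).div h3 (by positivity)).congr_deriv (by ring)
    have hd2 : HasDerivAt (fun y : ℝ => 1 / (4 * (y ^ 2 + M ^ 2) ^ 2))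
        (-(1 * (4 * (2 * (y ^ 2 + M ^ 2) ^ 1 * (2 * y)))) / (4 * (y ^ 2 + M ^ 2) ^ 2) ^ 2)
        y := by
      exact ((hasDerivAt_const y (1 : ℝ)).div h4 (by positivity)).congr_deriv (by ring)
    have := hd1.sub hd2
    refine this.congr_deriv ?_
    have h0 := hne y
    field_simp
    ring
  have hlim : Tendsto g atTop (nhds 0) := by
    have htop : Tendsto (fun y : ℝ => y ^ 2 + M ^ 2) atTop atTop :=
      (tendsto_pow_atTop two_ne_zero).atTop_add tendsto_const_nhds
    have t1 : Tendsto (fun y : ℝ => M ^ 2 / (6 * (y ^ 2 + M ^ 2) ^ 3)) atTop (nhds 0) := by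
      apply Tendsto.div_atTop tendsto_const_nhds
      exact (((tendsto_pow_atTop three_ne_zero).comp htop).const_mul_atTop (by norm_num))
    have t2 : Tendsto (fun y : ℝ => 1 / (4 * (y ^ 2 + M ^ 2) ^ 2)) atTop (nhds 0) := by
      apply Tendsto.div_atTop tendsto_const_nhds
      exact (((tendsto_pow_atTop two_ne_zero).comp htop).const_mul_atTop (by norm_num))
    have := t1.sub t2
    rw [sub_zero] at this
    exact this
  have key := integral_Ioi_of_hasDerivAt_of_nonneg' (g := g)
      (g' := fun y => y ^ 3 * (1 / (y ^ 2 + M ^ 2) ^ 4)) (a := 0)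
      (fun x _ => hderiv x) (fun x hx => by have hx0 : (0:ℝ) < x := hx; positivity) hlim
  rw [key, hg]
  have hM4 : (M : ℝ) ^ 4 ≠ 0 := by positivity
  field_simp
  ring

private lemma cont_aux (M : ℝ) (hM : 0 < M) :
    Continuous (fun q : EuclideanSpace ℝ (Fin 4) => 1 / (‖q‖ ^ 2 + M ^ 2) ^ 4) :=
  continuous_const.div (((continuous_norm.pow 2).add continuous_const).pow 4)
    (fun q => by positivity)

private lemma integrable_aux (M : ℝ) (hM : 0 < M) :
    Integrable (fun q : EuclideanSpace ℝ (Fin 4) => 1 / (‖q‖ ^ 2 + M ^ 2) ^ 4) := by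
  set c : ℝ := max 1 (M ^ 2)⁻¹ with hc
  have hc1 : (1 : ℝ) ≤ c := le_max_left _ _
  have hc0 : (0 : ℝ) < c := lt_of_lt_of_le one_pos hc1
  have hbase : Integrable
      (fun x : EuclideanSpace ℝ (Fin 4) => ((1 : ℝ) + ‖x‖ ^ 2) ^ (-(8 : ℝ) / 2)) :=
    integrable_rpow_neg_one_add_norm_sq (E := EuclideanSpace ℝ (Fin 4)) (by simp; norm_num)
  refine (hbase.const_mul (c ^ 4)).mono' ((cont_aux M hM).aestronglyMeasurable)
    (Filter.Eventually.of_forall fun x => ?_)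
  have hs : (0 : ℝ) ≤ ‖x‖ ^ 2 := by positivity
  have hrpow : ((1 : ℝ) + ‖x‖ ^ 2) ^ (-(8 : ℝ) / 2) = (((1 : ℝ) + ‖x‖ ^ 2) ^ (4 : ℕ))⁻¹ := by
    rw [show (-(8 : ℝ) / 2) = -(4 : ℕ) by norm_num, Real.rpow_neg (by linarith),
      Real.rpow_natCast]
  rw [hrpow]
  have hineq : (1 : ℝ) + ‖x‖ ^ 2 ≤ c * (‖x‖ ^ 2 + M ^ 2) := by
    have h1 : (1 : ℝ) ≤ c * M ^ 2 := by
      have : (M ^ 2)⁻¹ ≤ c := le_max_right _ _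
      calc (1 : ℝ) = (M ^ 2)⁻¹ * M ^ 2 := by field_simp
        _ ≤ c * M ^ 2 := by nlinarith [sq_nonneg M]
    nlinarith
  have hpos1 : (0 : ℝ) < (1 + ‖x‖ ^ 2) ^ 4 := by positivity
  have hpos2 : (0 : ℝ) < (‖x‖ ^ 2 + M ^ 2) ^ 4 := by positivity
  rw [Real.norm_eq_abs, abs_of_nonneg (by positivity)]
  rw [one_div, ← one_div ((‖x‖ ^ 2 + M ^ 2) ^ 4), ← one_div ((1 + ‖x‖ ^ 2) ^ 4),
    mul_one_div, div_le_div_iff₀ hpos2 hpos1]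
  calc 1 * (1 + ‖x‖ ^ 2) ^ 4 = (1 + ‖x‖ ^ 2) ^ 4 := one_mul _
    _ ≤ (c * (‖x‖ ^ 2 + M ^ 2)) ^ 4 := pow_le_pow_left₀ (by positivity) hineq 4
    _ = c ^ 4 * (‖x‖ ^ 2 + M ^ 2) ^ 4 := mul_pow _ _ _

/-- Identity (int-q10): `∫_{ℝ⁴} dq/(‖q‖²+M²)⁴ = π²/(6M⁴)`. -/
theorem integral_one_propagator_fourth (M : ℝ) (hM : 0 < M) :
    Integrable (fun q : EuclideanSpace ℝ (Fin 4) => 1 / (‖q‖ ^ 2 + M ^ 2) ^ 4) ∧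
    ∫ q : EuclideanSpace ℝ (Fin 4), 1 / (‖q‖ ^ 2 + M ^ 2) ^ 4 =
      π ^ 2 / (6 * M ^ 4) := by
  refine ⟨integrable_aux M hM, ?_⟩
  have h := MeasureTheory.integral_fun_norm_addHaar
    (volume : Measure (EuclideanSpace ℝ (Fin 4)))
    (fun r : ℝ => 1 / (r ^ 2 + M ^ 2) ^ 4)
  have hdim : Module.finrank ℝ (EuclideanSpace ℝ (Fin 4)) = 4 := by
    simp [finrank_euclideanSpace]
  rw [hdim] at h
  have hvol : (volume (ball (0 : EuclideanSpace ℝ (Fin 4)) 1)).toReal = π ^ 2 / 2 := by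
    rw [EuclideanSpace.volume_ball]
    have hΓ : Real.Gamma ((Fintype.card (Fin 4) : ℝ) / 2 + 1) = 2 := by
      rw [show ((Fintype.card (Fin 4) : ℝ) / 2 + 1) = ((2 : ℕ) : ℝ) + 1 by
        simp [Fintype.card_fin]; norm_num, Real.Gamma_nat_eq_factorial]
      norm_num [Nat.factorial]
    rw [hΓ]
    have hsq : Real.sqrt π ^ Fintype.card (Fin 4) = π ^ 2 := by
      rw [Fintype.card_fin, show (4 : ℕ) = 2 * 2 from rfl, pow_mul,
        Real.sq_sqrt Real.pi_nonneg]
    rw [hsq]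
    simp
    positivity
  have hradial : ∫ y in Set.Ioi (0 : ℝ), y ^ (4 - 1) • (1 / (y ^ 2 + M ^ 2) ^ 4)
      = 1 / (12 * M ^ 4) := by
    rw [show (4 - 1 : ℕ) = 3 from rfl]
    simp only [smul_eq_mul]
    exact radial_integral_aux M hM
  rw [h, measureReal_def, hvol, hradial]
  simp only [smul_eq_mul, nsmul_eq_mul, Nat.cast_ofNat]
  field_simp
  ring
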